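/- Let σ be a function of class KL and let a be a function of class K satisfying a(s) < s for all s > 0. Then there exists a function σ̃ of class KL with the following property: whenever t₀ ≤ t₁ are real numbers, y : [t₀, t₁] → [0, ∞) and u : [0, ∞) → [0, ∞) are locally bounded functions, and M ≥ 0 is a constant such that for every ξ ∈ [t₀, t₁] the inequality y(t) ≤ max{ σ(M, t − ξ), a( sup_{ξ ≤ τ ≤ t} y(τ) ), u(t) } holds for all t ∈ [ξ, t₁], then y(t) ≤ max{ σ̃(M, t − t₀), sup_{t₀ ≤ τ ≤ t} u(τ) } for all t ∈ [t₀, t₁]. -/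

import Mathlib

/-- A function `γ : [0,∞) → [0,∞)` is of class `K` if it is continuous,
strictly increasing and `γ 0 = 0`. -/
def ClassK (γ : ℝ → ℝ) : Prop :=
  ContinuousOn γ (Set.Ici 0) ∧ StrictMonoOn γ (Set.Ici 0) ∧ γ 0 = 0

/-- A function `σ : [0,∞) × [0,∞) → [0,∞)` is of class `KL` if it is continuous,
for each fixed `t ≥ 0` the map `s ↦ σ s t` is of class `K`, and for each fixed `s ≥ 0`
the map `t ↦ σ s t` is non-increasing with `σ s t → 0` as `t → +∞`. -/
def ClassKL (σ : ℝ → ℝ → ℝ) : Prop :=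
  ContinuousOn (fun p : ℝ × ℝ => σ p.1 p.2) (Set.Ici 0 ×ˢ Set.Ici 0) ∧
  (∀ t ∈ Set.Ici (0:ℝ), ClassK (fun s => σ s t)) ∧
  (∀ s ∈ Set.Ici (0:ℝ), AntitoneOn (σ s) (Set.Ici 0) ∧
    Filter.Tendsto (σ s) Filter.atTop (nhds 0)) ∧
  (∀ s ∈ Set.Ici (0:ℝ), ∀ t ∈ Set.Ici (0:ℝ), 0 ≤ σ s t)

/-- Absolute continuity of `y` on the interval `[a, b]`. -/
def AbsContOn {E : Type*} [NormedAddCommGroup E] (y : ℝ → E) (a b : ℝ) : Prop :=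
  ∀ ε > (0:ℝ), ∃ δ > (0:ℝ), ∀ n : ℕ, ∀ s t : ℕ → ℝ,
    (∀ i < n, a ≤ s i ∧ s i ≤ t i ∧ t i ≤ b) →
    (∀ i, i + 1 < n → t i ≤ s (i + 1)) →
    (∑ i ∈ Finset.range n, (t i - s i)) < δ →
    (∑ i ∈ Finset.range n, ‖y (t i) - y (s i)‖) < ε

open Filter Set

lemma hasSum_telescope {B : ℕ → ℝ} (hle : ∀ n, B (n+1) ≤ B n)
    (hlim : Tendsto B atTop (nhds 0)) :
    HasSum (fun n => B n - B (n+1)) (B 0) := by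
  rw [hasSum_iff_tendsto_nat_of_nonneg (fun n => sub_nonneg.2 (hle n))]
  have h : ∀ n, ∑ i ∈ Finset.range n, (B i - B (i+1)) = B 0 - B n := by
    intro n; exact Finset.sum_range_sub' B n
  simp only [h]
  simpa using tendsto_const_nhds.sub hlim

noncomputable def sgW (n : ℕ) (x : ℝ) : ℝ := max (min ((n:ℝ) + 1 - x) 1) 0

lemma sgW_nonneg (n : ℕ) (x : ℝ) : 0 ≤ sgW n x := le_max_right _ _
lemma sgW_le_one (n : ℕ) (x : ℝ) : sgW n x ≤ 1 := max_le (min_le_right _ _) zero_le_one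
lemma sgW_anti (n : ℕ) : Antitone (sgW n) := fun x y hxy =>
  max_le_max (min_le_min (by linarith) le_rfl) le_rfl
lemma sgW_cont (n : ℕ) : Continuous (sgW n) := by
  unfold sgW; fun_prop
lemma sgW_eq_zero {n : ℕ} {x : ℝ} (h : (n:ℝ) + 1 ≤ x) : sgW n x = 0 := by
  unfold sgW
  rw [max_eq_right]
  exact min_le_of_left_le (by linarith)
lemma sgW_eq_one {n : ℕ} {x : ℝ} (h : x ≤ n) : sgW n x = 1 := by
  unfold sgW
  rw [min_eq_right (by linarith), max_eq_left zero_le_one]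
lemma sgW_eq {n : ℕ} {x : ℝ} (h1 : (n:ℝ) ≤ x) (h2 : x ≤ (n:ℝ) + 1) :
    sgW n x = (n:ℝ) + 1 - x := by
  unfold sgW
  rw [min_eq_left (by linarith), max_eq_left (by linarith)]

noncomputable def sgG (a : ℝ → ℝ) (x r : ℝ) : ℝ :=
  ∑' n, sgW n x * (a^[n] r - a^[n+1] r)

section
variable {a : ℝ → ℝ} (ha : ClassK a) (ha' : ∀ s > (0:ℝ), a s < s)
include ha ha'
set_option linter.unusedSectionVars false

lemma a_nonneg {s : ℝ} (hs : 0 ≤ s) : 0 ≤ a s := by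
  rcases eq_or_lt_of_le hs with h | h
  · simp [← h, ha.2.2]
  · have := ha.2.1 (le_refl (0:ℝ) : (0:ℝ) ∈ Ici 0) (le_of_lt h : s ∈ Ici 0) h
    rw [ha.2.2] at this; linarith

lemma a_le_self {s : ℝ} (hs : 0 ≤ s) : a s ≤ s := by
  rcases eq_or_lt_of_le hs with h | h
  · simp [← h, ha.2.2]
  · exact le_of_lt (ha' s h)

lemma A_nonneg (n : ℕ) {r : ℝ} (hr : 0 ≤ r) : 0 ≤ a^[n] r := by
  induction n with
  | zero => simpa
  | succ n ih => rw [Function.iterate_succ_apply']; exact a_nonneg ha ha' ih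

lemma A_succ_le (n : ℕ) {r : ℝ} (hr : 0 ≤ r) : a^[n+1] r ≤ a^[n] r := by
  rw [Function.iterate_succ_apply']
  exact a_le_self ha ha' (A_nonneg ha ha' n hr)

lemma A_anti {r : ℝ} (hr : 0 ≤ r) : Antitone (fun n => a^[n] r) :=
  antitone_nat_of_succ_le fun n => A_succ_le ha ha' n hr

lemma A_le_self (n : ℕ) {r : ℝ} (hr : 0 ≤ r) : a^[n] r ≤ r := by
  simpa using A_anti ha ha' hr (Nat.zero_le n)

lemma A_zero (n : ℕ) : a^[n] (0:ℝ) = 0 :=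
  Function.iterate_fixed ha.2.2 n

lemma A_mono (n : ℕ) : MonotoneOn (a^[n]) (Ici 0) := by
  induction n with
  | zero => simpa using monotoneOn_id
  | succ n ih =>
    intro s hs t ht hst
    rw [Function.iterate_succ_apply', Function.iterate_succ_apply']
    exact ha.2.1.monotoneOn (A_nonneg ha ha' n hs) (A_nonneg ha ha' n ht) (ih hs ht hst)

lemma A_cont (n : ℕ) : ContinuousOn (a^[n]) (Ici 0) := by
  induction n with
  | zero => simpa using continuousOn_id
  | succ n ih =>
    rw [Function.iterate_succ']
    exact ha.1.comp ih fun s hs => A_nonneg ha ha' n hs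

lemma A_tendsto {r : ℝ} (hr : 0 ≤ r) :
    Tendsto (fun n => a^[n] r) atTop (nhds 0) := by
  set c : ℕ → ℝ := fun n => a^[n] r with hc
  have hanti : Antitone c := A_anti ha ha' hr
  have hbdd : BddBelow (Set.range c) := ⟨0, fun x ⟨n, hn⟩ => hn ▸ A_nonneg ha ha' n hr⟩
  have hlim : Tendsto c atTop (nhds (⨅ n, c n)) := tendsto_atTop_ciInf hanti hbdd
  have hL : 0 ≤ ⨅ n, c n := le_ciInf fun n => A_nonneg ha ha' n hr
  set L := ⨅ n, c n
  have h1 : Tendsto (fun n => c (n+1)) atTop (nhds L) :=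
    hlim.comp (tendsto_add_atTop_nat 1)
  have h2 : Tendsto (fun n => a (c n)) atTop (nhds (a L)) := by
    have : Tendsto c atTop (nhdsWithin L (Ici 0)) := by
      rw [tendsto_nhdsWithin_iff]
      exact ⟨hlim, Eventually.of_forall fun n => A_nonneg ha ha' n hr⟩
    exact (ha.1 L hL).tendsto.comp this
  have heq : ∀ n, c (n+1) = a (c n) := fun n => Function.iterate_succ_apply' a n r
  have haL : a L = L := by
    have := tendsto_nhds_unique (by simpa [heq] using h1) h2
    exact this.symm
  rcases eq_or_lt_of_le hL with h | h
  · rwa [← h] at hlim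
  · exact absurd haL (ne_of_lt (ha' L h))

lemma hasSum_A_tail (N : ℕ) {r : ℝ} (hr : 0 ≤ r) :
    HasSum (fun i => a^[i+N] r - a^[i+N+1] r) (a^[N] r) := by
  have hlimN : Tendsto (fun i : ℕ => a^[N+i] r) atTop (nhds 0) := by
    have h1 : Tendsto (fun i : ℕ => N + i) atTop atTop := by
      simpa [Nat.add_comm] using tendsto_add_atTop_nat N
    exact (A_tendsto ha ha' hr).comp h1
  have h := hasSum_telescope (B := fun i => a^[N+i] r)
    (fun i => A_succ_le ha ha' (N+i) hr) hlimN
  have he : (fun i => a^[i+N] r - a^[i+N+1] r)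
      = (fun i => a^[N+i] r - a^[N+(i+1)] r) := by
    funext i
    rw [Nat.add_comm i N, Nat.add_assoc]
  rw [he]
  simpa using h

lemma summable_sg {x r : ℝ} (hr : 0 ≤ r) :
    Summable (fun n => sgW n x * (a^[n] r - a^[n+1] r)) := by
  apply Summable.of_nonneg_of_le
    (fun n => mul_nonneg (sgW_nonneg n x) (sub_nonneg.2 (A_succ_le ha ha' n hr)))
    (fun n => ?_)
    ((hasSum_telescope (fun n => A_succ_le ha ha' n hr) (A_tendsto ha ha' hr)).summable)
  calc sgW n x * (a^[n] r - a^[n+1] r)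
      ≤ 1 * (a^[n] r - a^[n+1] r) :=
        mul_le_mul_of_nonneg_right (sgW_le_one n x) (sub_nonneg.2 (A_succ_le ha ha' n hr))
    _ = a^[n] r - a^[n+1] r := one_mul _

lemma sgG_nonneg {x r : ℝ} (hr : 0 ≤ r) : 0 ≤ sgG a x r :=
  tsum_nonneg fun n => mul_nonneg (sgW_nonneg n x) (sub_nonneg.2 (A_succ_le ha ha' n hr))

lemma sgG_zero_r (x : ℝ) : sgG a x 0 = 0 := by
  unfold sgG
  simp [A_zero ha ha']

lemma sgG_anti {r : ℝ} (hr : 0 ≤ r) : Antitone (fun x => sgG a x r) := by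
  intro x y hxy
  exact Summable.tsum_le_tsum
    (fun n => mul_le_mul_of_nonneg_right (sgW_anti n hxy)
      (sub_nonneg.2 (A_succ_le ha ha' n hr)))
    (summable_sg ha ha' hr) (summable_sg ha ha' hr)

lemma sgG_closed {x r : ℝ} (hx : 0 ≤ x) (hr : 0 ≤ r) :
    sgG a x r = ((⌊x⌋₊:ℝ) + 1 - x) * (a^[⌊x⌋₊] r - a^[⌊x⌋₊+1] r) + a^[⌊x⌋₊+1] r := by
  set m := ⌊x⌋₊ with hm
  have hmx : (m:ℝ) ≤ x := Nat.floor_le hx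
  have hxm : x < (m:ℝ) + 1 := Nat.lt_floor_add_one x
  have hsum := summable_sg ha ha' (x := x) hr
  have hsplit := (Summable.sum_add_tsum_nat_add (f := fun n => sgW n x * (a^[n] r - a^[n+1] r))
    (m+1) hsum).symm
  rw [sgG, hsplit]
  have hhead : ∑ i ∈ Finset.range (m+1), sgW i x * (a^[i] r - a^[i+1] r)
      = ((m:ℝ) + 1 - x) * (a^[m] r - a^[m+1] r) := by
    rw [Finset.sum_eq_single_of_mem m (Finset.self_mem_range_succ m)]
    · rw [sgW_eq hmx (le_of_lt hxm)]
    · intro i hi hne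
      have hi' : i < m := by
        have := Finset.mem_range.1 hi; omega
      rw [sgW_eq_zero, zero_mul]
      have : (i:ℝ) + 1 ≤ (m:ℝ) := by exact_mod_cast Nat.succ_le_of_lt hi'
      linarith
  have htail : ∑' i, sgW (i+(m+1)) x * (a^[i+(m+1)] r - a^[i+(m+1)+1] r)
      = a^[m+1] r := by
    have h1 : ∀ i : ℕ, sgW (i+(m+1)) x * (a^[i+(m+1)] r - a^[i+(m+1)+1] r)
        = a^[i+(m+1)] r - a^[i+(m+1)+1] r := by
      intro i
      rw [sgW_eq_one, one_mul]
      have : (m:ℝ) + 1 ≤ ((i+(m+1):ℕ):ℝ) := by push_cast; linarith [Nat.cast_nonneg (α := ℝ) i]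
      linarith
    simp only [h1]
    exact (hasSum_A_tail ha ha' (m+1) hr).tsum_eq
  rw [hhead, htail]

lemma sgG_nat (n : ℕ) {r : ℝ} (hr : 0 ≤ r) : sgG a n r = a^[n] r := by
  rw [sgG_closed ha ha' (Nat.cast_nonneg n) hr, Nat.floor_natCast]
  ring

lemma sgG_le_floor {x r : ℝ} (hx : 0 ≤ x) (hr : 0 ≤ r) : sgG a x r ≤ a^[⌊x⌋₊] r := by
  rw [sgG_closed ha ha' hx hr]
  have hΔ : 0 ≤ a^[⌊x⌋₊] r - a^[⌊x⌋₊+1] r := sub_nonneg.2 (A_succ_le ha ha' _ hr)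
  have hc : ((⌊x⌋₊:ℝ) + 1 - x) ≤ 1 := by
    have := Nat.floor_le hx; linarith
  nlinarith

lemma sgG_mono_r {x : ℝ} (hx : 0 ≤ x) : MonotoneOn (sgG a x) (Ici 0) := by
  intro r1 h1 r2 h2 h12
  rw [sgG_closed ha ha' hx h1, sgG_closed ha ha' hx h2]
  have hc1 : 0 ≤ (⌊x⌋₊:ℝ) + 1 - x := by linarith [Nat.lt_floor_add_one x]
  have hc2 : 0 ≤ x - (⌊x⌋₊:ℝ) := by linarith [Nat.floor_le hx]
  have e : ∀ r : ℝ, ((⌊x⌋₊:ℝ) + 1 - x) * (a^[⌊x⌋₊] r - a^[⌊x⌋₊+1] r) + a^[⌊x⌋₊+1] r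
      = ((⌊x⌋₊:ℝ) + 1 - x) * a^[⌊x⌋₊] r + (x - (⌊x⌋₊:ℝ)) * a^[⌊x⌋₊+1] r := by
    intro r; ring
  rw [e r1, e r2]
  exact add_le_add
    (mul_le_mul_of_nonneg_left (A_mono ha ha' _ h1 h2 h12) hc1)
    (mul_le_mul_of_nonneg_left (A_mono ha ha' _ h1 h2 h12) hc2)

lemma sgG_tendsto {r : ℝ} (hr : 0 ≤ r) :
    Tendsto (fun x => sgG a x r) atTop (nhds 0) := by
  apply tendsto_of_tendsto_of_tendsto_of_le_of_le'
    (tendsto_const_nhds : Tendsto (fun _ : ℝ => (0:ℝ)) atTop (nhds 0))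
    ((A_tendsto ha ha' hr).comp tendsto_nat_floor_atTop)
  · filter_upwards [eventually_ge_atTop (0:ℝ)] with x hx
    exact sgG_nonneg ha ha' hr
  · filter_upwards [eventually_ge_atTop (0:ℝ)] with x hx
    exact sgG_le_floor ha ha' hx hr

lemma sgG_contOn : ContinuousOn (fun p : ℝ × ℝ => sgG a p.1 p.2) (univ ×ˢ Ici 0) := by
  intro p hp
  have hp2 : 0 ≤ p.2 := hp.2
  set R : ℝ := p.2 + 1 with hR
  have hR0 : (0:ℝ) ≤ R := by linarith
  set V : Set (ℝ × ℝ) := univ ×ˢ Icc 0 R with hV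
  set S : ℕ → ℝ × ℝ → ℝ :=
    fun N q => ∑ n ∈ Finset.range N, sgW n q.1 * (a^[n] q.2 - a^[n+1] q.2) with hS
  have hScont : ∀ N, ContinuousOn (S N) V := by
    intro N
    apply continuousOn_finset_sum
    intro n _
    apply ContinuousOn.mul
    · exact ((sgW_cont n).comp continuous_fst).continuousOn
    · exact ContinuousOn.sub
        ((A_cont ha ha' n).comp continuous_snd.continuousOn (fun q hq => hq.2.1))
        ((A_cont ha ha' (n+1)).comp continuous_snd.continuousOn (fun q hq => hq.2.1))
  have hUnif : TendstoUniformlyOn (fun N q => S N q) (fun q => sgG a q.1 q.2) atTop V := by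
    rw [Metric.tendstoUniformlyOn_iff]
    intro ε hε
    have hlim : Tendsto (fun N => a^[N] R) atTop (nhds 0) := A_tendsto ha ha' hR0
    filter_upwards [hlim (Iio_mem_nhds hε)] with N hN q hq
    have hq2 : q.2 ∈ Icc 0 R := hq.2
    have hq2' : 0 ≤ q.2 := hq2.1
    have hsum := summable_sg ha ha' (x := q.1) (r := q.2) hq2'
    have htailsummable : Summable
        (fun i => sgW (i+N) q.1 * (a^[i+N] q.2 - a^[i+N+1] q.2)) := by
      apply Summable.of_nonneg_of_le
        (fun i => mul_nonneg (sgW_nonneg _ _) (sub_nonneg.2 (A_succ_le ha ha' _ hq2')))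
        (fun i => ?_) (hasSum_A_tail ha ha' N hq2').summable
      calc sgW (i+N) q.1 * (a^[i+N] q.2 - a^[i+N+1] q.2)
          ≤ 1 * (a^[i+N] q.2 - a^[i+N+1] q.2) :=
            mul_le_mul_of_nonneg_right (sgW_le_one _ _)
              (sub_nonneg.2 (A_succ_le ha ha' _ hq2'))
        _ = _ := one_mul _
    have hdiff : sgG a q.1 q.2 - S N q
        = ∑' i, sgW (i+N) q.1 * (a^[i+N] q.2 - a^[i+N+1] q.2) := by
      have := Summable.sum_add_tsum_nat_add (f := fun n => sgW n q.1 * (a^[n] q.2 - a^[n+1] q.2))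
        N hsum
      rw [sgG, ← this, hS]
      ring
    have htail_nonneg : 0 ≤ ∑' i, sgW (i+N) q.1 * (a^[i+N] q.2 - a^[i+N+1] q.2) :=
      tsum_nonneg fun i => mul_nonneg (sgW_nonneg _ _)
        (sub_nonneg.2 (A_succ_le ha ha' _ hq2'))
    have htail_le : (∑' i, sgW (i+N) q.1 * (a^[i+N] q.2 - a^[i+N+1] q.2)) ≤ a^[N] q.2 := by
      have h1 : (∑' i, sgW (i+N) q.1 * (a^[i+N] q.2 - a^[i+N+1] q.2))
          ≤ ∑' i, (a^[i+N] q.2 - a^[i+N+1] q.2) := by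
        apply Summable.tsum_le_tsum (fun i => ?_) htailsummable (hasSum_A_tail ha ha' N hq2').summable
        calc sgW (i+N) q.1 * (a^[i+N] q.2 - a^[i+N+1] q.2)
            ≤ 1 * (a^[i+N] q.2 - a^[i+N+1] q.2) :=
              mul_le_mul_of_nonneg_right (sgW_le_one _ _)
                (sub_nonneg.2 (A_succ_le ha ha' _ hq2'))
          _ = _ := one_mul _
      rw [(hasSum_A_tail ha ha' N hq2').tsum_eq] at h1
      exact h1
    have hmono : a^[N] q.2 ≤ a^[N] R := A_mono ha ha' N hq2' hR0 hq2.2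
    rw [dist_eq_norm, Real.norm_eq_abs, hdiff, abs_of_nonneg htail_nonneg]
    exact lt_of_le_of_lt (le_trans htail_le hmono) hN
  have hVcont : ContinuousOn (fun q : ℝ × ℝ => sgG a q.1 q.2) V :=
    hUnif.continuousOn (Eventually.of_forall hScont).frequently
  have hpV : p ∈ V := ⟨mem_univ _, ⟨hp2, by linarith⟩⟩
  have hmem : V ∈ nhdsWithin p (univ ×ˢ Ici 0) := by
    rw [mem_nhdsWithin]
    refine ⟨univ ×ˢ Iio R, isOpen_univ.prod isOpen_Iio,
      ⟨mem_univ _, by simp [hR]⟩, ?_⟩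
    rintro q ⟨⟨-, hq1⟩, ⟨-, hq2⟩⟩
    exact ⟨mem_univ _, ⟨hq2, le_of_lt hq1⟩⟩
  exact (hVcont p hpV).mono_of_mem_nhdsWithin hmem

end
noncomputable def sgq (t : ℝ) : ℝ := max (Real.sqrt t - 1) 0

lemma sgq_nonneg (t : ℝ) : 0 ≤ sgq t := le_max_right _ _
lemma sgq_mono : Monotone sgq := fun x y hxy =>
  max_le_max (by linarith [Real.sqrt_le_sqrt hxy]) le_rfl
lemma sgq_cont : Continuous sgq := by
  unfold sgq; fun_prop
lemma sgq_tendsto_atTop : Tendsto sgq atTop atTop := by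
  have h1 : Tendsto Real.sqrt atTop atTop := by
    rw [tendsto_atTop]
    intro b
    filter_upwards [eventually_ge_atTop (b^2)] with t ht
    exact Real.le_sqrt_of_sq_le ht
  have h2 : Tendsto (fun t => Real.sqrt t - 1) atTop atTop :=
    tendsto_atTop_add_const_right atTop (-1) h1
  exact tendsto_atTop_mono (fun t => le_max_left _ _) h2
lemma sgq_eq_zero {t : ℝ} (h0 : 0 ≤ t) (h : t < 1) : sgq t = 0 := by
  have : Real.sqrt t < 1 := by
    rw [Real.sqrt_lt' one_pos]; linarith
  unfold sgq
  rw [max_eq_right]; linarith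

theorem stmt_0 (σ : ℝ → ℝ → ℝ) (a : ℝ → ℝ)
    (hσ : ClassKL σ) (ha : ClassK a) (ha' : ∀ s > (0:ℝ), a s < s) :
    ∃ σ' : ℝ → ℝ → ℝ, ClassKL σ' ∧
      ∀ t₀ t₁ : ℝ, 0 ≤ t₀ → t₀ ≤ t₁ → ∀ y u : ℝ → ℝ, ∀ M : ℝ, 0 ≤ M →
        (∀ t ∈ Set.Icc t₀ t₁, 0 ≤ y t) →
        (∀ t ≥ (0:ℝ), 0 ≤ u t) →
        (∃ C, ∀ t ∈ Set.Icc t₀ t₁, y t ≤ C) →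
        (∀ b : ℝ, ∃ C, ∀ t ∈ Set.Icc (0:ℝ) b, u t ≤ C) →
        (∀ ξ ∈ Set.Icc t₀ t₁, ∀ t ∈ Set.Icc ξ t₁,
          y t ≤ max (σ M (t - ξ)) (max (a (sSup (y '' Set.Icc ξ t))) (u t))) →
        ∀ t ∈ Set.Icc t₀ t₁,
          y t ≤ max (σ' M (t - t₀)) (sSup (u '' Set.Icc t₀ t)) := by
  obtain ⟨hσc, hσK, hσL, hσpos⟩ := hσ
  set σ' : ℝ → ℝ → ℝ :=
    fun s t => s * Real.exp (-t) + max (σ s (sgq t)) (sgG a (sgq t) (σ s 0)) with hσ'def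
  have hσ00 : ∀ t ∈ Ici (0:ℝ), σ 0 t = 0 := fun t ht => (hσK t ht).2.2
  refine ⟨σ', ⟨?_, ?_, ?_, ?_⟩, ?_⟩
  · -- joint continuity
    apply ContinuousOn.add
    · exact (continuous_fst.mul (Real.continuous_exp.comp continuous_snd.neg)).continuousOn
    · apply ContinuousOn.sup
      · apply hσc.comp ((continuous_fst.prodMk (sgq_cont.comp continuous_snd)).continuousOn)
        intro p hp
        exact ⟨hp.1, sgq_nonneg _⟩
      · have hinner : ContinuousOn (fun p : ℝ × ℝ => (sgq p.2, σ p.1 0)) (Ici 0 ×ˢ Ici 0) := by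
          apply ContinuousOn.prodMk
          · exact (sgq_cont.comp continuous_snd).continuousOn
          · apply hσc.comp ((continuous_fst.prodMk continuous_const).continuousOn)
            intro p hp; exact ⟨hp.1, Set.self_mem_Ici⟩
        have := ContinuousOn.comp (g := fun p : ℝ × ℝ => sgG a p.1 p.2)
          (f := fun p : ℝ × ℝ => (sgq p.2, σ p.1 0)) (sgG_contOn ha ha') hinner
          (fun p hp => ⟨mem_univ _, hσpos p.1 hp.1 0 Set.self_mem_Ici⟩)
        exact this
  · -- ClassK in s
    intro t ht
    refine ⟨?_, ?_, ?_⟩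
    · apply ContinuousOn.add
      · exact (continuous_id.mul continuous_const).continuousOn
      · apply ContinuousOn.sup
        · apply hσc.comp ((continuous_id.prodMk continuous_const).continuousOn)
          intro s hs; exact ⟨hs, sgq_nonneg t⟩
        · have hinner : ContinuousOn (fun s : ℝ => (sgq t, σ s 0)) (Ici 0) := by
            apply ContinuousOn.prodMk continuousOn_const
            apply hσc.comp ((continuous_id.prodMk continuous_const).continuousOn)
            intro s hs; exact ⟨hs, Set.self_mem_Ici⟩
          have := ContinuousOn.comp (g := fun p : ℝ × ℝ => sgG a p.1 p.2)
            (f := fun s : ℝ => (sgq t, σ s 0)) (sgG_contOn ha ha') hinner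
            (fun s hs => ⟨mem_univ _, hσpos s hs 0 Set.self_mem_Ici⟩)
          exact this
    · intro s1 hs1 s2 hs2 h12
      simp only [hσ'def]
      apply add_lt_add_of_lt_of_le
      · exact mul_lt_mul_of_pos_right h12 (Real.exp_pos (-t))
      · apply max_le_max
        · exact (hσK (sgq t) (sgq_nonneg t)).2.1.monotoneOn hs1 hs2 (le_of_lt h12)
        · exact sgG_mono_r ha ha' (sgq_nonneg t) (hσpos s1 hs1 0 Set.self_mem_Ici)
            (hσpos s2 hs2 0 Set.self_mem_Ici) ((hσK 0 Set.self_mem_Ici).2.1.monotoneOn hs1 hs2 (le_of_lt h12))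
    · simp only [hσ'def]
      rw [hσ00 (sgq t) (sgq_nonneg t), hσ00 0 Set.self_mem_Ici, sgG_zero_r ha ha']
      simp
  · -- antitone and tendsto in t
    intro s hs
    constructor
    · intro t1 h1 t2 h2 h12
      simp only [hσ'def]
      apply add_le_add
      · exact mul_le_mul_of_nonneg_left (Real.exp_le_exp.2 (neg_le_neg h12)) hs
      · apply max_le_max
        · exact (hσL s hs).1 (sgq_nonneg t1) (sgq_nonneg t2) (sgq_mono h12)
        · exact sgG_anti ha ha' (hσpos s hs 0 Set.self_mem_Ici) (sgq_mono h12)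
    · simp only [hσ'def]
      have h1 : Tendsto (fun t : ℝ => s * Real.exp (-t)) atTop (nhds 0) := by
        simpa using Real.tendsto_exp_neg_atTop_nhds_zero.const_mul s
      have h2 : Tendsto (fun t => σ s (sgq t)) atTop (nhds 0) :=
        (hσL s hs).2.comp sgq_tendsto_atTop
      have h3 : Tendsto (fun t => sgG a (sgq t) (σ s 0)) atTop (nhds 0) :=
        (sgG_tendsto ha ha' (hσpos s hs 0 Set.self_mem_Ici)).comp sgq_tendsto_atTop
      simpa using h1.add (h2.max h3)
  · -- nonneg
    intro s hs t ht
    simp only [hσ'def]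
    exact add_nonneg (mul_nonneg hs (Real.exp_pos _).le)
      (le_trans (hσpos s hs (sgq t) (sgq_nonneg t)) (le_max_left _ _))
  · -- main property
    intro t₀ t₁ ht₀ ht01 y u M hM hy hu hylb hub hyp t ht
    obtain ⟨C, hC⟩ := hylb
    obtain ⟨Cu, hCu⟩ := hub t₁
    set U : ℝ → ℝ := fun e => sSup (u '' Icc t₀ e) with hU
    have hbddy : ∀ {s e : ℝ}, t₀ ≤ s → e ≤ t₁ → BddAbove (y '' Icc s e) := by
      intro s e hs he
      exact ⟨C, by rintro v ⟨τ, hτ, rfl⟩; exact hC τ ⟨le_trans hs hτ.1, le_trans hτ.2 he⟩⟩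
    have hbddu : ∀ {e : ℝ}, e ≤ t₁ → BddAbove (u '' Icc t₀ e) := by
      intro e he
      exact ⟨Cu, by rintro v ⟨τ, hτ, rfl⟩; exact hCu τ ⟨le_trans ht₀ hτ.1, le_trans hτ.2 he⟩⟩
    have hUub : ∀ {τ e : ℝ}, τ ∈ Icc t₀ e → e ≤ t₁ → u τ ≤ U e := fun hτ he =>
      le_csSup (hbddu he) (mem_image_of_mem u hτ)
    have hU0 : ∀ {e : ℝ}, e ∈ Icc t₀ t₁ → 0 ≤ U e := by
      intro e he
      exact le_trans (hu e (le_trans ht₀ he.1)) (hUub ⟨he.1, le_rfl⟩ he.2)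
    have hUmono : ∀ {d e : ℝ}, t₀ ≤ d → d ≤ e → e ≤ t₁ → U d ≤ U e := by
      intro d e hd hde he
      exact csSup_le_csSup (hbddu he) ⟨u d, mem_image_of_mem u ⟨hd, le_rfl⟩⟩
        (image_mono (f := u) (Icc_subset_Icc le_rfl hde))
    have hσM0 : 0 ≤ σ M 0 := hσpos M hM 0 Set.self_mem_Ici
    -- base bound
    have hbase : ∀ e ∈ Icc t₀ t₁, y e ≤ max (σ M 0) (U e) := by
      intro e he
      set s := sSup (y '' Icc t₀ e) with hs
      have hsne : (y '' Icc t₀ e).Nonempty := ⟨y e, mem_image_of_mem y ⟨he.1, le_rfl⟩⟩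
      have hsbdd : BddAbove (y '' Icc t₀ e) := hbddy le_rfl he.2
      have hyts : y e ≤ s := le_csSup hsbdd (mem_image_of_mem y ⟨he.1, le_rfl⟩)
      have hs0 : 0 ≤ s := le_trans (hy e he) hyts
      have hkey : s ≤ max (σ M 0) (max (a s) (U e)) := by
        apply csSup_le hsne
        rintro v ⟨τ, hτ, rfl⟩
        have hτ' : τ ∈ Icc t₀ t₁ := ⟨hτ.1, le_trans hτ.2 he.2⟩
        have h1 := hyp t₀ ⟨le_rfl, ht01⟩ τ ⟨hτ.1, hτ'.2⟩
        have h2 : σ M (τ - t₀) ≤ σ M 0 :=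
          (hσL M hM).1 (mem_Ici.2 le_rfl) (mem_Ici.2 (by linarith [hτ.1]))
            (by linarith [hτ.1])
        have h3 : sSup (y '' Icc t₀ τ) ≤ s :=
          csSup_le_csSup hsbdd ⟨y τ, mem_image_of_mem y ⟨hτ.1, le_rfl⟩⟩
            (image_mono (f := y) (Icc_subset_Icc le_rfl hτ.2))
        have h3' : 0 ≤ sSup (y '' Icc t₀ τ) :=
          le_trans (hy τ hτ') (le_csSup (hbddy le_rfl hτ'.2)
            (mem_image_of_mem y ⟨hτ.1, le_rfl⟩))
        have h4 : a (sSup (y '' Icc t₀ τ)) ≤ a s :=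
          ha.2.1.monotoneOn (mem_Ici.2 h3') (mem_Ici.2 hs0) h3
        have h5 : u τ ≤ U e := hUub hτ he.2
        calc y τ ≤ max (σ M (τ - t₀)) (max (a (sSup (y '' Icc t₀ τ))) (u τ)) := h1
          _ ≤ max (σ M 0) (max (a s) (U e)) := max_le_max h2 (max_le_max h4 h5)
      by_cases hcase : s ≤ max (σ M 0) (U e)
      · exact le_trans hyts hcase
      · push_neg at hcase
        have hsa : s ≤ a s := by
          rcases le_max_iff.1 hkey with h | h
          · exfalso; have := le_max_left (σ M 0) (U e); linarith
          · rcases le_max_iff.1 h with h' | h'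
            · exact h'
            · exfalso; have := le_max_right (σ M 0) (U e); linarith
        rcases eq_or_lt_of_le hs0 with h0 | h0
        · have hy0 : y e ≤ 0 := h0 ▸ hyts
          exact le_trans hy0 (le_trans hσM0 (le_max_left _ _))
        · exact absurd hsa (not_le.2 (ha' s h0))
    -- step lemma
    have hstep : ∀ n : ℕ, ∀ h : ℝ, 0 ≤ h → ∀ e ∈ Icc t₀ t₁, t₀ + n * h ≤ e →
        y e ≤ max (max (σ M h) (a^[n] (σ M 0))) (U e) := by
      intro n
      induction n with
      | zero =>
        intro h hh e he _
        refine le_trans (hbase e he) (max_le_max ?_ le_rfl)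
        simpa using le_max_right (σ M h) (σ M 0)
      | succ n ih =>
        intro h hh e he hsep
        rcases eq_or_lt_of_le hh with hh0 | hh0
        · refine le_trans (hbase e he) (max_le_max ?_ le_rfl)
          rw [← hh0]
          exact le_max_left _ _
        · set ξ := e - h with hξdef
          have hnh : (0:ℝ) ≤ n * h := mul_nonneg (Nat.cast_nonneg n) hh
          have hsep' : t₀ + (n:ℝ) * h + h ≤ e := by push_cast at hsep; linarith
          have hξmem : ξ ∈ Icc t₀ t₁ := ⟨by simp only [hξdef]; linarith,
            by simp only [hξdef]; linarith [he.2]⟩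
          have hems : e ∈ Icc ξ t₁ := ⟨by simp only [hξdef]; linarith, he.2⟩
          have h1 := hyp ξ hξmem e hems
          have hte : e - ξ = h := by simp [hξdef]
          rw [hte] at h1
          set s := sSup (y '' Icc ξ e) with hsdef
          have hsbdd : BddAbove (y '' Icc ξ e) := hbddy hξmem.1 he.2
          have hsne : (y '' Icc ξ e).Nonempty :=
            ⟨y e, mem_image_of_mem y ⟨by simp only [hξdef]; linarith, le_rfl⟩⟩
          set B := max (max (σ M h) (a^[n] (σ M 0))) (U e) with hBdef
          have hsB : s ≤ B := by
            apply csSup_le hsne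
            rintro v ⟨τ, hτ, rfl⟩
            have hξτ : ξ ≤ τ := hτ.1
            have hτ1 : τ ∈ Icc t₀ t₁ := ⟨le_trans hξmem.1 hτ.1, le_trans hτ.2 he.2⟩
            have hτsep : t₀ + n * h ≤ τ := by
              have : ξ = e - h := hξdef
              linarith
            refine le_trans (ih h hh τ hτ1 hτsep) (max_le_max le_rfl ?_)
            exact hUmono hτ1.1 hτ.2 he.2
          have hs0 : 0 ≤ s := le_trans (hy e he)
            (le_csSup hsbdd (mem_image_of_mem y ⟨by simp only [hξdef]; linarith, le_rfl⟩))
          have hB0 : 0 ≤ B := le_trans (hU0 he) (le_max_right _ _)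
          have haB : a s ≤ a B := ha.2.1.monotoneOn (mem_Ici.2 hs0) (mem_Ici.2 hB0) hsB
          have hgoalB : a B ≤ max (max (σ M h) (a^[n+1] (σ M 0))) (U e) := by
            rcases max_choice (max (σ M h) (a^[n] (σ M 0))) (U e) with hch | hch
            · rw [hBdef, hch]
              rcases max_choice (σ M h) (a^[n] (σ M 0)) with hc2 | hc2
              · rw [hc2]
                exact le_trans (a_le_self ha ha' (hσpos M hM h hh))
                  (le_max_of_le_left (le_max_left _ _))
              · rw [hc2]
                have he2 : a (a^[n] (σ M 0)) = a^[n+1] (σ M 0) :=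
                  (Function.iterate_succ_apply' a n _).symm
                rw [he2]
                exact le_max_of_le_left (le_max_right _ _)
            · rw [hBdef, hch]
              exact le_trans (a_le_self ha ha' (hU0 he)) (le_max_right _ _)
          have hue : u e ≤ U e := hUub ⟨he.1, le_rfl⟩ he.2
          calc y e ≤ max (σ M h) (max (a s) (u e)) := h1
            _ ≤ max (max (σ M h) (a^[n+1] (σ M 0))) (U e) := by
              apply max_le
              · exact le_max_of_le_left (le_max_left _ _)
              · exact max_le (le_trans haB hgoalB)
                  (le_trans hue (le_max_right _ _))
    -- conclusion
    simp only [hσ'def]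
    set d := t - t₀ with hd
    have hd0 : 0 ≤ d := by simp only [hd]; linarith [ht.1]
    have hMe : 0 ≤ M * Real.exp (-d) := mul_nonneg hM (Real.exp_pos _).le
    by_cases hd1 : d < 1
    · have hq0 : sgq d = 0 := sgq_eq_zero hd0 hd1
      refine le_trans (hbase t ht) (max_le_max ?_ le_rfl)
      rw [hq0]
      have h2 : σ M 0 ≤ max (σ M 0) (sgG a 0 (σ M 0)) := le_max_left _ _
      linarith
    · push_neg at hd1
      set n := ⌈Real.sqrt d⌉₊ with hn
      have hsq1 : 1 ≤ Real.sqrt d := (Real.le_sqrt zero_le_one hd0).2 (by nlinarith)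
      have hn1 : 1 ≤ n := Nat.one_le_ceil_iff.2 (lt_of_lt_of_le one_pos hsq1)
      have hnpos : (0:ℝ) < n := by exact_mod_cast Nat.lt_of_lt_of_le Nat.zero_lt_one hn1
      set h := d / n with hh
      have hhnn : 0 ≤ h := div_nonneg hd0 hnpos.le
      have hsepn : t₀ + n * h ≤ t := by
        have he1 : (n:ℝ) * (d / n) = d := by field_simp
        rw [hh, he1]
        linarith
      have hmain := hstep n h hhnn t ht hsepn
      have hqle_h : sgq d ≤ h := by
        apply max_le _ hhnn
        rw [hh, le_div_iff₀ hnpos]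
        have hceil : (n:ℝ) < Real.sqrt d + 1 := by
          rw [hn]; exact Nat.ceil_lt_add_one (Real.sqrt_nonneg d)
        have hsq : Real.sqrt d ^ 2 = d := Real.sq_sqrt hd0
        nlinarith
      have hqle_n : sgq d ≤ (n:ℝ) := by
        apply max_le _ hnpos.le
        have := Nat.le_ceil (Real.sqrt d)
        rw [hn]; linarith
      have hb1 : σ M h ≤ σ M (sgq d) := (hσL M hM).1 (mem_Ici.2 (sgq_nonneg d))
        (mem_Ici.2 hhnn) hqle_h
      have hb2 : a^[n] (σ M 0) ≤ sgG a (sgq d) (σ M 0) := by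
        rw [← sgG_nat ha ha' n hσM0]
        exact sgG_anti ha ha' hσM0 hqle_n
      refine le_trans hmain (max_le_max ?_ le_rfl)
      apply max_le
      · have : σ M (sgq d) ≤ max (σ M (sgq d)) (sgG a (sgq d) (σ M 0)) := le_max_left _ _
        linarith
      · have : sgG a (sgq d) (σ M 0) ≤ max (σ M (sgq d)) (sgG a (sgq d) (σ M 0)) :=
          le_max_right _ _
        linarith
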